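/- Let n ≥ 2 be an integer, σ ∈ (0,1), and 0 < ε ≤ 1. Let u be a positive C¹ function on B_1 \ {0} ⊂ ℝⁿ such that for every x with 0 < |x| ≤ ε/2, every λ with 0 < λ < |x|, and every y with |y − x| ≥ λ and 0 < |y| ≤ 1, the moving-sphere inequality (λ/|y − x|)^{n−2σ} · u(x + λ²(y − x)/|y − x|²) ≤ u(y) holds. Then |∇u(x)| ≤ ((n−2σ)/|x|) · u(x) for all x with 0 < |x| < ε/4 (equivalently, |∇ log u(x)| ≤ (n−2σ)/|x|). -/

import Mathlib

open scoped Topology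

open scoped RealInnerProductSpace

noncomputable section

/-- The moving-sphere inequalities imply the gradient estimate
`|∇u(x)| ≤ ((n-2σ)/|x|) u(x)` for `0 < |x| < ε/4`. -/
theorem stmt_13 (n : ℕ) (hn : 2 ≤ n) (σ : ℝ) (hσ : σ ∈ Set.Ioo (0 : ℝ) 1)
    (ε : ℝ) (hε : 0 < ε) (hε1 : ε ≤ 1)
    (u : EuclideanSpace ℝ (Fin n) → ℝ)
    (hpos : ∀ x : EuclideanSpace ℝ (Fin n), ‖x‖ < 1 → x ≠ 0 → 0 < u x)
    (hC1 : ContDiffOn ℝ 1 u ({x : EuclideanSpace ℝ (Fin n) | ‖x‖ < 1} \ {0}))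
    (hms : ∀ x : EuclideanSpace ℝ (Fin n), 0 < ‖x‖ → ‖x‖ ≤ ε / 2 →
      ∀ lam : ℝ, 0 < lam → lam < ‖x‖ →
        ∀ y : EuclideanSpace ℝ (Fin n), lam ≤ ‖y - x‖ → 0 < ‖y‖ → ‖y‖ ≤ 1 →
          (lam / ‖y - x‖) ^ ((n : ℝ) - 2 * σ) *
              u (x + (lam ^ 2 / ‖y - x‖ ^ 2) • (y - x)) ≤ u y) :
    ∀ x : EuclideanSpace ℝ (Fin n), 0 < ‖x‖ → ‖x‖ < ε / 4 →
      ‖fderiv ℝ u x‖ ≤ (((n : ℝ) - 2 * σ) / ‖x‖) * u x := by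
  intro p hp0 hp
  set c : ℝ := (n : ℝ) - 2 * σ with hc
  have hn2 : (2:ℝ) ≤ (n:ℝ) := by exact_mod_cast hn
  have hcpos : 0 < c := by nlinarith [hσ.2]
  have hp1 : ‖p‖ < 1 := by linarith
  have hpne : p ≠ 0 := fun h => by simp [h] at hp0
  have hup : 0 < u p := hpos p hp1 hpne
  -- differentiability at p
  have hopen : IsOpen ({x : EuclideanSpace ℝ (Fin n) | ‖x‖ < 1} \ {0}) := by
    exact (isOpen_lt continuous_norm continuous_const).sdiff isClosed_singleton
  have hpmem : p ∈ ({x : EuclideanSpace ℝ (Fin n) | ‖x‖ < 1} \ {0}) :=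
    ⟨hp1, hpne⟩
  have hdiff : HasFDerivAt u (fderiv ℝ u p) p := by
    have h1 : DifferentiableAt ℝ u p :=
      ((hC1.differentiableOn one_ne_zero) p hpmem).differentiableAt (hopen.mem_nhds hpmem)
    exact h1.hasFDerivAt
  set L := fderiv ℝ u p with hL
  -- key directional estimate
  have key : ∀ e : EuclideanSpace ℝ (Fin n), ‖e‖ = 1 → ∀ t : ℝ, 0 < t → t < ‖p‖ / 2 →
      -(c / (2 * t)) * u p ≤ L e := by
    intro e he t ht0 ht
    have htne : t ≠ 0 := ne_of_gt ht0
    set x : EuclideanSpace ℝ (Fin n) := p - t • e with hxdef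
    have hip : (inner ℝ p e : ℝ) ≤ ‖p‖ := by
      calc (inner ℝ p e : ℝ) ≤ ‖p‖ * ‖e‖ := real_inner_le_norm p e
        _ = ‖p‖ := by rw [he, mul_one]
    have hnte : ‖t • e‖ = t := by
      rw [norm_smul, he, mul_one, Real.norm_eq_abs, abs_of_pos ht0]
    have hxsq : ‖x‖ ^ 2 = ‖p‖ ^ 2 - 2 * (t * (inner ℝ p e : ℝ)) + t ^ 2 := by
      rw [hxdef, norm_sub_sq_real, real_inner_smul_right, hnte]
    have hxt : t < ‖x‖ := by
      nlinarith [norm_nonneg x, sq_nonneg (‖x‖ - t)]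
    have hx0 : 0 < ‖x‖ := ht0.trans hxt
    have hxε : ‖x‖ ≤ ε / 2 := by
      have : ‖x‖ ≤ ‖p‖ + ‖t • e‖ := norm_sub_le _ _
      rw [hnte] at this
      linarith
    have hyx : p - x = t • e := by rw [hxdef]; abel
    have hnyx : ‖p - x‖ = t := by rw [hyx, hnte]
    -- define g
    set g : ℝ → ℝ := fun l => (l / t) ^ c * u (x + (l ^ 2 / t ^ 2) • (t • e)) with hg
    have hgt : g t = u p := by
      have h1 : (t:ℝ) / t = 1 := div_self htne
      have h2 : (t:ℝ) ^ 2 / t ^ 2 = 1 := div_self (pow_ne_zero 2 htne)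
      rw [hg]; simp only [h1, h2, Real.one_rpow, one_mul, one_smul]
      rw [hxdef]; congr 1; abel
    have hle : ∀ l ∈ Set.Ioo (0:ℝ) t, g l ≤ u p := by
      intro l hl
      have := hms x hx0 hxε l hl.1 (hl.2.trans hxt) p (by rw [hnyx]; exact hl.2.le)
        hp0 hp1.le
      rwa [hnyx, hyx] at this
    -- g differentiable at t
    have hφ : HasDerivAt (fun l : ℝ => x + (l ^ 2 / t ^ 2) • (t • e))
        ((2 * t ^ 1 / t ^ 2) • (t • e)) t := by
      have h1 : HasDerivAt (fun l : ℝ => l ^ 2 / t ^ 2) (2 * t ^ 1 / t ^ 2) t := by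
        have := (hasDerivAt_pow 2 t).div_const (t ^ 2)
        simpa using this
      exact (h1.smul_const (t • e)).const_add x
    have hφt : x + ((t:ℝ) ^ 2 / t ^ 2) • (t • e) = p := by
      rw [div_self (pow_ne_zero 2 htne), one_smul, hxdef]; abel
    have hu2 : HasDerivAt (fun l : ℝ => u (x + (l ^ 2 / t ^ 2) • (t • e)))
        (L ((2 * t ^ 1 / t ^ 2) • (t • e))) t := by
      have hdiff' : HasFDerivAt u L (x + ((t:ℝ) ^ 2 / t ^ 2) • (t • e)) := hφt ▸ hdiff
      have := hdiff'.comp_hasDerivAt t hφ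
      exact this
    have h1 : HasDerivAt (fun l : ℝ => (l / t) ^ c) (c / t) t := by
      have hd : HasDerivAt (fun l : ℝ => l / t) (1 / t) t := by
        simpa using (hasDerivAt_id t).div_const t
      have h1' := hd.rpow_const (p := c) (Or.inl (by rw [div_self htne]; norm_num))
      convert h1' using 1
      rw [div_self htne, Real.one_rpow]
      ring
    have hLval : L ((2 * t ^ 1 / t ^ 2) • (t • e)) = 2 * L e := by
      rw [smul_smul, map_smul]
      have : 2 * t ^ 1 / t ^ 2 * t = 2 := by field_simp
      rw [this]; simp
    have hgderiv : HasDerivAt g (c / t * u p + 2 * L e) t := by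
      have := h1.mul hu2
      rw [hg]
      refine this.congr_deriv ?_
      rw [hφt, hLval, div_self htne, Real.one_rpow, one_mul]
    -- derivative nonneg from one-sided max
    have h0 : 0 ≤ c / t * u p + 2 * L e := by
      have hslope : Filter.Tendsto (slope g t) (𝓝[<] t) (𝓝 (c / t * u p + 2 * L e)) :=
        (hasDerivAt_iff_tendsto_slope.1 hgderiv).mono_left
          (nhdsWithin_mono t (fun y hy => ne_of_lt hy))
      refine ge_of_tendsto hslope ?_
      filter_upwards [Ioo_mem_nhdsLT_of_mem (Set.mem_Ioc.2 ⟨ht0, le_rfl⟩)] with l hl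
      have hs : slope g t l = (g t - g l) / (t - l) := by
        rw [slope]
        simp only [vsub_eq_sub, smul_eq_mul]
        rw [← neg_sub t l, ← neg_sub (g t) (g l), inv_neg, neg_mul_neg, div_eq_inv_mul]
      rw [hs]
      have hgl : g l ≤ g t := by rw [hgt]; exact hle l hl
      apply div_nonneg (by linarith) (by linarith [hl.2])
    have heq : c / (2 * t) * u p = (c / t * u p) / 2 := by ring
    linarith
  -- pass to the limit t → ‖p‖/2
  have key2 : ∀ e : EuclideanSpace ℝ (Fin n), ‖e‖ = 1 → -(c / ‖p‖ * u p) ≤ L e := by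
    intro e he
    have hpne2 : (2:ℝ) * (‖p‖ / 2) ≠ 0 := by positivity
    have hcont : ContinuousAt (fun t : ℝ => -(c / (2 * t)) * u p) (‖p‖ / 2) := by
      exact (((continuousAt_const).div ((continuous_const.mul continuous_id).continuousAt)
        hpne2).neg.mul continuousAt_const)
    have hval : -(c / (2 * (‖p‖ / 2))) * u p = -(c / ‖p‖ * u p) := by
      rw [mul_div_cancel₀ _ (two_ne_zero)]; ring
    have htend : Filter.Tendsto (fun t : ℝ => -(c / (2 * t)) * u p) (𝓝[<] (‖p‖ / 2))
        (𝓝 (-(c / ‖p‖ * u p))) := by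
      rw [← hval]
      exact hcont.continuousWithinAt.tendsto
    refine le_of_tendsto htend ?_
    filter_upwards [Ioo_mem_nhdsLT_of_mem (Set.mem_Ioc.2 ⟨by positivity, le_rfl⟩)] with t htm
    exact key e he t htm.1 htm.2
  have key3 : ∀ e : EuclideanSpace ℝ (Fin n), ‖e‖ = 1 → |L e| ≤ c / ‖p‖ * u p := by
    intro e he
    rw [abs_le]
    constructor
    · linarith [key2 e he]
    · have := key2 (-e) (by rwa [norm_neg])
      rw [map_neg] at this
      linarith
  have hC : 0 ≤ c / ‖p‖ * u p := by positivity
  refine ContinuousLinearMap.opNorm_le_bound _ hC fun v => ?_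
  rcases eq_or_ne v 0 with hv | hv
  · simp [hv]
  · have hvn : ‖v‖ ≠ 0 := norm_ne_zero_iff.2 hv
    have he : ‖(‖v‖⁻¹ • v)‖ = 1 := by
      rw [norm_smul, norm_inv, norm_norm, inv_mul_cancel₀ hvn]
    have hLv : L v = ‖v‖ • L (‖v‖⁻¹ • v) := by
      rw [← map_smul, smul_inv_smul₀ hvn]
    calc ‖L v‖ = ‖v‖ * |L (‖v‖⁻¹ • v)| := by
          rw [hLv]; rw [norm_smul, norm_norm, Real.norm_eq_abs]
      _ ≤ ‖v‖ * (c / ‖p‖ * u p) := by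
          exact mul_le_mul_of_nonneg_left (key3 _ he) (norm_nonneg v)
      _ = c / ‖p‖ * u p * ‖v‖ := by ring
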